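/- Cyclic reduction of arrow words: for every word l over {α, β} of even length there exists exactly one natural number n such that l can be transformed into the word (αβ)ⁿ (the 2n-letter alternating word αβαβ…αβ; for n = 0, the empty word) by a finite sequence of moves, each of which is either a cyclic rotation or a cancellation step deleting an adjacent pair of equal letters. -/

import Mathlib

/-- A cancellation step on arrow words over the two-letter alphabet {α, β}
(modeled as `List Bool`): delete an adjacent pair of equal letters. -/
def CancelStep (l l' : List Bool) : Prop :=
  ∃ (p s : List Bool) (x : Bool), l = p ++ [x, x] ++ s ∧ l' = p ++ s

/-- A cyclic move on arrow words: either a cancellation step or a cyclic rotation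
(moving letters from the front of the word to the back). -/
def CyclicMove (l l' : List Bool) : Prop :=
  CancelStep l l' ∨ ∃ n : ℕ, l' = l.rotate n

/-- The word (αβ)ⁿ: the alternating word of length 2n (empty for n = 0). -/
def abPow (n : ℕ) : List Bool :=
  (List.replicate n [true, false]).flatten

/-- The word (βα)ⁿ. -/
def ftPow (n : ℕ) : List Bool :=
  (List.replicate n [false, true]).flatten

lemma abPow_succ (n : ℕ) : abPow (n+1) = true :: false :: abPow n := by
  simp [abPow, List.replicate_succ]

lemma ftPow_succ (n : ℕ) : ftPow (n+1) = false :: true :: ftPow n := by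
  simp [ftPow, List.replicate_succ]

/-- Value of a letter (α ↦ 0, β ↦ 1). -/
def bval (b : Bool) : ℤ := if b then 0 else 1

/-- Alternating sum of letter values: the translation part of the word viewed
in the infinite dihedral group. -/
def altsum : List Bool → ℤ
  | [] => 0
  | a :: t => bval a - altsum t

lemma altsum_append (u v : List Bool) :
    altsum (u ++ v) = altsum u + (-1) ^ u.length * altsum v := by
  induction u with
  | nil => simp [altsum]
  | cons a t ih =>
    rw [List.cons_append]
    show bval a - altsum (t ++ v) = _
    rw [ih, List.length_cons, pow_succ]
    simp only [altsum]
    ring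

lemma altsum_cancel (p s : List Bool) (x : Bool) :
    altsum (p ++ [x, x] ++ s) = altsum (p ++ s) := by
  rw [List.append_assoc, altsum_append, altsum_append, altsum_append]
  have h1 : altsum [x, x] = 0 := by simp [altsum]
  rw [h1]
  norm_num

lemma altsum_rotate_one (l : List Bool) (h : Even l.length) :
    altsum (l.rotate 1) = - altsum l := by
  cases l with
  | nil => simp [altsum]
  | cons a t =>
    have ht : Odd t.length := by
      simp only [List.length_cons] at h
      rcases Nat.even_or_odd t.length with he | ho
      · exact absurd h (by simp [Nat.even_add_one, he])
      · exact ho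
    rw [List.rotate_cons_succ, List.rotate_zero, altsum_append]
    rw [Odd.neg_one_pow ht]
    simp [altsum]
    ring

lemma altsum_rotate (l : List Bool) (h : Even l.length) (n : ℕ) :
    altsum (l.rotate n) = (-1) ^ n * altsum l := by
  induction n with
  | zero => simp
  | succ n ih =>
    have : l.rotate (n + 1) = (l.rotate n).rotate 1 := by
      rw [List.rotate_rotate]
    rw [this, altsum_rotate_one _ (by simpa using h), ih, pow_succ]
    ring

lemma move_inv {l l' : List Bool} (h : CyclicMove l l') (he : Even l.length) :
    Even l'.length ∧ (altsum l').natAbs = (altsum l).natAbs := by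
  rcases h with ⟨p, s, x, rfl, rfl⟩ | ⟨n, rfl⟩
  · constructor
    · simp only [List.length_append, List.length_cons, List.length_nil] at he ⊢
      rcases he with ⟨k, hk⟩
      exact ⟨k - 1, by omega⟩
    · rw [altsum_cancel]
  · refine ⟨by simpa using he, ?_⟩
    rw [altsum_rotate l he n, Int.natAbs_mul]
    have : ((-1 : ℤ) ^ n).natAbs = 1 := by
      rcases Nat.even_or_odd n with hn | hn
      · rw [hn.neg_one_pow]; rfl
      · rw [hn.neg_one_pow]; rfl
    rw [this, one_mul]

lemma rtg_inv {l l' : List Bool} (h : Relation.ReflTransGen CyclicMove l l')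
    (he : Even l.length) :
    Even l'.length ∧ (altsum l').natAbs = (altsum l).natAbs := by
  induction h with
  | refl => exact ⟨he, rfl⟩
  | tail _ h2 ih =>
    obtain ⟨e, eq⟩ := ih
    obtain ⟨e', eq'⟩ := move_inv h2 e
    exact ⟨e', eq'.trans eq⟩

lemma altsum_abPow (n : ℕ) : altsum (abPow n) = -(n : ℤ) := by
  induction n with
  | zero => simp [abPow, altsum]
  | succ n ih =>
    rw [abPow_succ]
    simp only [altsum, bval, ih]
    push_cast
    ring

lemma chain_or_cancel (l : List Bool) :
    l.Chain' (· ≠ ·) ∨ ∃ p s x, l = p ++ [x, x] ++ s := by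
  induction l with
  | nil => left; exact List.isChain_nil
  | cons a t ih =>
    cases t with
    | nil => left; exact List.isChain_singleton _
    | cons b t' =>
      by_cases hab : a = b
      · right; exact ⟨[], t', a, by simp [hab]⟩
      · rcases ih with hc | ⟨p, s, x, hps⟩
        · left; exact List.isChain_cons_cons.mpr ⟨hab, hc⟩
        · right; exact ⟨a :: p, s, x, by simp [hps]⟩

lemma chain_alt : ∀ N (l : List Bool), l.length = N → l.Chain' (· ≠ ·) →
    Even l.length → (∃ m, l = abPow m) ∨ (∃ m, l = ftPow m) := by
  intro N
  induction N using Nat.strong_induction_on with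
  | _ N ih =>
    intro l hlen hc he
    match l with
    | [] => exact Or.inl ⟨0, rfl⟩
    | [a] => simp at he
    | a :: b :: t =>
      obtain ⟨hab, hc'⟩ := List.isChain_cons_cons.mp hc
      have htc : t.Chain' (· ≠ ·) := hc'.tail
      have hte : Even t.length := by
        simp only [List.length_cons] at he
        rcases he with ⟨k, hk⟩
        exact ⟨k - 1, by omega⟩
      have hlt : t.length < N := by simp at hlen; omega
      rcases ih t.length hlt t rfl htc hte with ⟨m, hm⟩ | ⟨m, hm⟩
      · -- t = abPow m : needs a = true (else b = true = head of t contradiction, or ok)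
        cases m with
        | zero =>
          simp only [abPow, List.replicate, List.flatten_nil] at hm
          subst hm
          cases a with
          | false =>
            right
            refine ⟨1, ?_⟩
            have hb : b = true := by cases b <;> simp_all
            subst hb
            rfl
          | true =>
            left
            refine ⟨1, ?_⟩
            have hb : b = false := by cases b <;> simp_all
            subst hb
            rfl
        | succ m' =>
          subst hm
          rw [abPow_succ] at hc' ⊢
          have hb : b ≠ true := (List.isChain_cons_cons.mp hc').1
          have hbf : b = false := by simpa using hb
          subst hbf
          have ha : a = true := by cases a <;> simp_all
          subst ha
          exact Or.inl ⟨m' + 2, by rw [abPow_succ, abPow_succ]⟩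
      · cases m with
        | zero =>
          simp only [ftPow, List.replicate, List.flatten_nil] at hm
          subst hm
          cases a with
          | false =>
            right
            refine ⟨1, ?_⟩
            have hb : b = true := by cases b <;> simp_all
            subst hb
            rfl
          | true =>
            left
            refine ⟨1, ?_⟩
            have hb : b = false := by cases b <;> simp_all
            subst hb
            rfl
        | succ m' =>
          subst hm
          rw [ftPow_succ] at hc' ⊢
          have hb : b ≠ false := (List.isChain_cons_cons.mp hc').1
          have hbt : b = true := by simpa using hb
          subst hbt
          have ha : a = false := by cases a <;> simp_all
          subst ha
          exact Or.inr ⟨m' + 2, by rw [ftPow_succ, ftPow_succ]⟩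

lemma ftPow_append_false (m : ℕ) : ftPow m ++ [false] = false :: abPow m := by
  induction m with
  | zero => simp [ftPow, abPow]
  | succ m ih =>
    rw [ftPow_succ, abPow_succ]
    simp [ih]

lemma ftPow_rotate (m : ℕ) : (ftPow m).rotate 1 = abPow m := by
  cases m with
  | zero => simp [ftPow, abPow]
  | succ m =>
    rw [ftPow_succ, List.rotate_cons_succ, List.rotate_zero, abPow_succ]
    have : (true :: ftPow m) ++ [false] = true :: false :: abPow m := by
      simp [ftPow_append_false]
    simpa using this

lemma exists_reduce : ∀ N (l : List Bool), l.length = N → Even l.length →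
    ∃ n, Relation.ReflTransGen CyclicMove l (abPow n) := by
  intro N
  induction N using Nat.strong_induction_on with
  | _ N ih =>
    intro l hlen he
    rcases chain_or_cancel l with hc | ⟨p, s, x, rfl⟩
    · rcases chain_alt l.length l rfl hc he with ⟨m, hm⟩ | ⟨m, hm⟩
      · exact ⟨m, hm ▸ Relation.ReflTransGen.refl⟩
      · refine ⟨m, ?_⟩
        subst hm
        exact Relation.ReflTransGen.single
          (Or.inr ⟨1, (ftPow_rotate m).symm⟩ : CyclicMove (ftPow m) (abPow m))
    · have hstep : CyclicMove (p ++ [x, x] ++ s) (p ++ s) :=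
        Or.inl ⟨p, s, x, rfl, rfl⟩
      have hlen' : (p ++ s).length < N := by
        simp only [List.length_append, List.length_cons, List.length_nil] at hlen ⊢
        omega
      have he' : Even (p ++ s).length := by
        simp only [List.length_append, List.length_cons, List.length_nil] at he ⊢
        rcases he with ⟨k, hk⟩
        exact ⟨k - 1, by omega⟩
      obtain ⟨n, hn⟩ := ih (p ++ s).length hlen' (p ++ s) rfl he'
      exact ⟨n, Relation.ReflTransGen.head hstep hn⟩

/-- Cyclic reduction of arrow words: every even-length word over {α, β} reduces,
by cyclic rotations and cancellation steps, to (αβ)ⁿ for exactly one n. -/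
theorem cyclic_reduction_unique (l : List Bool) (hl : Even l.length) :
    ∃! n : ℕ, Relation.ReflTransGen CyclicMove l (abPow n) := by
  obtain ⟨n, hn⟩ := exists_reduce l.length l rfl hl
  refine ⟨n, hn, ?_⟩
  intro m hm
  have h1 := (rtg_inv hm hl).2
  have h2 := (rtg_inv hn hl).2
  rw [altsum_abPow] at h1 h2
  simp only [Int.natAbs_neg, Int.natAbs_natCast] at h1 h2
  omega
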